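/- If a system C = (1, c₂, ..., cₙ) with n ≥ 3 is noncanonical and w is its minimum counterexample, then c₃ + 1 < w < c_{n-1} + cₙ. -/
import Mathlib


open Finset

/-- `x` is a representation of value `v` in the coin system `c 1, …, c n`. -/
def IsRepr (n : ℕ) (c : ℕ → ℕ) (v : ℕ) (x : ℕ → ℕ) : Prop :=
  ∑ i ∈ Finset.Icc 1 n, c i * x i = v

/-- Minimum number of coins over all representations of `v`. -/
noncomputable def opt (n : ℕ) (c : ℕ → ℕ) (v : ℕ) : ℕ :=
  sInf {k | ∃ x : ℕ → ℕ, IsRepr n c v x ∧ ∑ i ∈ Finset.Icc 1 n, x i = k}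

/-- Number of coins used by the greedy algorithm to pay `v`. -/
def grd (n : ℕ) (c : ℕ → ℕ) (v : ℕ) : ℕ :=
  if hv : v = 0 then 0
  else
    let m := ((Finset.Icc 1 n).filter (fun i => c i ≤ v)).sup c
    if hm : 0 < m then grd n c (v - m) + 1 else 0
termination_by v
decreasing_by omega

/-- The system is canonical: greedy is optimal for every positive value. -/
def Canonical (n : ℕ) (c : ℕ → ℕ) : Prop :=
  ∀ v, 0 < v → opt n c v = grd n c v

/-- `w` is a counterexample to the system. -/
def IsCex (n : ℕ) (c : ℕ → ℕ) (w : ℕ) : Prop :=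
  0 < w ∧ opt n c w < grd n c w

/-- `w` is the minimum counterexample to the system. -/
def MinCex (n : ℕ) (c : ℕ → ℕ) (w : ℕ) : Prop :=
  IsCex n c w ∧ ∀ u, IsCex n c u → w ≤ u

/-- A (currency) system: first coin is `1` and coins strictly increase. -/
def IsSystem (n : ℕ) (c : ℕ → ℕ) : Prop :=
  c 1 = 1 ∧ StrictMonoOn c (Set.Icc 1 n)

section KZaux

variable {n : ℕ} {c : ℕ → ℕ}

lemma c_le_c (hm : StrictMonoOn c (Set.Icc 1 n)) {i j : ℕ} (hi : 1 ≤ i) (hij : i ≤ j)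
    (hj : j ≤ n) : c i ≤ c j :=
  hm.monotoneOn ⟨hi, le_trans hij hj⟩ ⟨le_trans hi hij, hj⟩ hij

lemma c_pos (h1 : c 1 = 1) (hm : StrictMonoOn c (Set.Icc 1 n)) {i : ℕ} (hi : 1 ≤ i)
    (hin : i ≤ n) : 1 ≤ c i := h1 ▸ c_le_c hm le_rfl hi hin

lemma opt_le_repr {v : ℕ} {x : ℕ → ℕ} (hx : IsRepr n c v x) :
    opt n c v ≤ ∑ i ∈ Finset.Icc 1 n, x i :=
  Nat.sInf_le ⟨x, hx, rfl⟩

lemma opt_zero : opt n c 0 = 0 := by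
  have h : IsRepr n c 0 (fun _ => 0) := by simp [IsRepr]
  have := opt_le_repr h
  simpa using this

lemma exists_opt (h1 : c 1 = 1) (hn1 : 1 ≤ n) (v : ℕ) :
    ∃ x, IsRepr n c v x ∧ ∑ i ∈ Finset.Icc 1 n, x i = opt n c v := by
  have hrepr : IsRepr n c v (fun i => if i = 1 then v else 0) := by
    unfold IsRepr
    have : ∀ i, c i * (if i = 1 then v else 0) = if i = 1 then c i * v else 0 := by
      intro i; split <;> simp
    rw [Finset.sum_congr rfl (fun i _ => this i), Finset.sum_ite_eq']
    simp [Finset.mem_Icc, hn1, h1]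
  have hne : {k | ∃ x, IsRepr n c v x ∧ ∑ i ∈ Finset.Icc 1 n, x i = k}.Nonempty :=
    ⟨_, _, hrepr, rfl⟩
  exact Nat.sInf_mem hne

lemma opt_pos (h1 : c 1 = 1) (hn1 : 1 ≤ n) {v : ℕ} (hv : 0 < v) : 1 ≤ opt n c v := by
  obtain ⟨x, hx, hxc⟩ := exists_opt h1 hn1 v
  by_contra h
  have h0 : ∑ i ∈ Finset.Icc 1 n, x i = 0 := by omega
  have : ∀ i ∈ Finset.Icc 1 n, x i = 0 := Finset.sum_eq_zero_iff.mp h0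
  have : ∑ i ∈ Finset.Icc 1 n, c i * x i = 0 :=
    Finset.sum_eq_zero (fun i hi => by rw [this i hi, mul_zero])
  rw [hx] at this; omega

lemma opt_add_coin (h1 : c 1 = 1) (hn1 : 1 ≤ n) {j v : ℕ} (hj1 : 1 ≤ j) (hjn : j ≤ n) :
    opt n c (v + c j) ≤ opt n c v + 1 := by
  obtain ⟨x, hx, hxc⟩ := exists_opt h1 hn1 v
  have hite : ∀ (f : ℕ → ℕ), ∑ i ∈ Finset.Icc 1 n, (if i = j then f i else 0) = f j := by
    intro f
    rw [Finset.sum_ite_eq']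
    simp [Finset.mem_Icc, hj1, hjn]
  have hrepr : IsRepr n c (v + c j) (fun i => x i + if i = j then 1 else 0) := by
    unfold IsRepr
    have : ∀ i, c i * (x i + if i = j then 1 else 0)
        = c i * x i + (if i = j then c i else 0) := by
      intro i; split <;> ring
    rw [Finset.sum_congr rfl (fun i _ => this i), Finset.sum_add_distrib, hx,
      hite (fun i => c i)]
  have := opt_le_repr hrepr
  rw [Finset.sum_add_distrib, hxc, hite (fun _ => 1)] at this
  exact this

lemma opt_sub_coin (h1 : c 1 = 1) (hm : StrictMonoOn c (Set.Icc 1 n)) (hn1 : 1 ≤ n) {v j : ℕ} {x : ℕ → ℕ}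
    (hj1 : 1 ≤ j) (hjn : j ≤ n) (hx : IsRepr n c v x)
    (hxc : ∑ i ∈ Finset.Icc 1 n, x i = opt n c v) (hxj : 0 < x j) :
    c j ≤ v ∧ opt n c (v - c j) + 1 ≤ opt n c v := by
  have hjm : j ∈ Finset.Icc 1 n := Finset.mem_Icc.mpr ⟨hj1, hjn⟩
  have hesum : ∑ i ∈ (Finset.Icc 1 n).erase j, c i * x i + c j * x j = v := by
    rw [Finset.sum_erase_add _ _ hjm]; exact hx
  have hecnt : ∑ i ∈ (Finset.Icc 1 n).erase j, x i + x j = opt n c v := by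
    rw [Finset.sum_erase_add _ _ hjm]; exact hxc
  have hcj1 : 1 ≤ c j := c_pos h1 hm hj1 hjn
  have hmul : c j * x j = c j * (x j - 1) + c j := by
    conv_lhs => rw [show x j = (x j - 1) + 1 by omega]
    ring
  have hcjv : c j ≤ v := by omega
  set y : ℕ → ℕ := fun i => if i = j then x j - 1 else x i with hy
  have hyj : y j = x j - 1 := by simp [hy]
  have hye : ∀ f : ℕ → ℕ → ℕ, ∑ i ∈ (Finset.Icc 1 n).erase j, f i (y i)
      = ∑ i ∈ (Finset.Icc 1 n).erase j, f i (x i) := by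
    intro f
    refine Finset.sum_congr rfl (fun i hi => ?_)
    have : i ≠ j := Finset.ne_of_mem_erase hi
    simp [hy, this]
  have hyrepr : IsRepr n c (v - c j) y := by
    unfold IsRepr
    rw [← Finset.sum_erase_add _ _ hjm, hye (fun i a => c i * a), hyj]
    omega
  have := opt_le_repr hyrepr
  rw [← Finset.sum_erase_add _ _ hjm, hye (fun _ a => a), hyj] at this
  exact ⟨hcjv, by omega⟩

end KZaux

section KZgrd

variable {n : ℕ} {c : ℕ → ℕ}

lemma grd_zero : grd n c 0 = 0 := by rw [grd]; simp

lemma grd_step (h1 : c 1 = 1) (hm : StrictMonoOn c (Set.Icc 1 n)) (hn1 : 1 ≤ n) {v j : ℕ} (hj1 : 1 ≤ j) (hjn : j ≤ n)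
    (hcjv : c j ≤ v)
    (hmax : ∀ i, 1 ≤ i → i ≤ n → c i ≤ v → c i ≤ c j) :
    grd n c v = grd n c (v - c j) + 1 := by
  have hcj1 : 1 ≤ c j := c_pos h1 hm hj1 hjn
  have hv : v ≠ 0 := by omega
  have hmem : j ∈ (Finset.Icc 1 n).filter (fun i => c i ≤ v) :=
    Finset.mem_filter.mpr ⟨Finset.mem_Icc.mpr ⟨hj1, hjn⟩, hcjv⟩
  have hsup : ((Finset.Icc 1 n).filter (fun i => c i ≤ v)).sup c = c j := by
    refine le_antisymm (Finset.sup_le ?_) (Finset.le_sup hmem)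
    intro i hi
    rw [Finset.mem_filter, Finset.mem_Icc] at hi
    exact hmax i hi.1.1 hi.1.2 hi.2
  rw [grd, dif_neg hv]
  simp only [hsup]
  rw [dif_pos (by omega : 0 < c j)]

lemma opt_le_grd (h1 : c 1 = 1) (hm : StrictMonoOn c (Set.Icc 1 n)) (hn1 : 1 ≤ n) :
    ∀ v, opt n c v ≤ grd n c v := by
  intro v
  induction v using Nat.strong_induction_on with
  | _ v ih =>
    rcases Nat.eq_zero_or_pos v with h0 | hv
    · subst h0; rw [opt_zero, grd_zero]
    have hfil : (1:ℕ) ∈ (Finset.Icc 1 n).filter (fun i => c i ≤ v) := by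
      simp only [Finset.mem_filter, Finset.mem_Icc, h1]
      omega
    obtain ⟨j, hjmem, hjsup⟩ := Finset.exists_mem_eq_sup _ ⟨1, hfil⟩ c
    rw [Finset.mem_filter, Finset.mem_Icc] at hjmem
    have hmax : ∀ i, 1 ≤ i → i ≤ n → c i ≤ v → c i ≤ c j := by
      intro i hi1 hin hciv
      rw [← hjsup]
      exact Finset.le_sup (Finset.mem_filter.mpr ⟨Finset.mem_Icc.mpr ⟨hi1, hin⟩, hciv⟩)
    have hcj1 : 1 ≤ c j := c_pos h1 hm hjmem.1.1 hjmem.1.2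
    have hstep : grd n c v = grd n c (v - c j) + 1 :=
      grd_step h1 hm hn1 hjmem.1.1 hjmem.1.2 hjmem.2 hmax
    have hadd : opt n c v ≤ opt n c (v - c j) + 1 := by
      have heq : (v - c j) + c j = v := by omega
      calc opt n c v = opt n c ((v - c j) + c j) := by rw [heq]
        _ ≤ _ := opt_add_coin h1 hn1 hjmem.1.1 hjmem.1.2
    have := ih (v - c j) (by omega)
    omega

lemma grd_small (h1 : c 1 = 1) (hm : StrictMonoOn c (Set.Icc 1 n)) (hn : 3 ≤ n) :
    ∀ v, v < c 3 → grd n c v = v / c 2 + v % c 2 := by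
  have h12 : c 1 < c 2 := hm ⟨le_rfl, by omega⟩ ⟨by omega, by omega⟩ (by omega)
  have h23 : c 2 < c 3 := hm ⟨by omega, by omega⟩ ⟨by omega, by omega⟩ (by omega)
  have hc2 : 2 ≤ c 2 := by omega
  intro v
  induction v using Nat.strong_induction_on with
  | _ v ih =>
    intro hv
    rcases Nat.eq_zero_or_pos v with h0 | hpos
    · subst h0; rw [grd_zero]; simp
    by_cases hv2 : v < c 2
    · have hmax : ∀ i, 1 ≤ i → i ≤ n → c i ≤ v → c i ≤ c 1 := by
        intro i hi1 hin hciv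
        rcases Nat.lt_or_ge i 2 with h | h
        · have : i = 1 := by omega
          subst this; exact le_rfl
        · have : c 2 ≤ c i := c_le_c hm (by omega) h hin
          omega
      rw [grd_step h1 hm (by omega) le_rfl (by omega) (by omega : c 1 ≤ v) hmax, h1]
      rw [ih (v - 1) (by omega) (by omega)]
      have e1 : (v-1) / c 2 = 0 := Nat.div_eq_of_lt (by omega)
      have e2 : v / c 2 = 0 := Nat.div_eq_of_lt (by omega)
      have e3 : (v-1) % c 2 = v - 1 := Nat.mod_eq_of_lt (by omega)
      have e4 : v % c 2 = v := Nat.mod_eq_of_lt (by omega)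
      omega
    · push_neg at hv2
      have hmax : ∀ i, 1 ≤ i → i ≤ n → c i ≤ v → c i ≤ c 2 := by
        intro i hi1 hin hciv
        rcases Nat.lt_or_ge i 3 with h | h
        · exact c_le_c hm hi1 (by omega) (by omega)
        · have : c 3 ≤ c i := c_le_c hm (by omega) h hin
          omega
      rw [grd_step h1 hm (by omega) (by omega) (by omega) hv2 hmax]
      rw [ih (v - c 2) (by omega) (by omega)]
      have hdm := Nat.div_add_mod v (c 2)
      set q := v / c 2 with hq
      set r := v % c 2 with hr
      have hrlt : r < c 2 := Nat.mod_lt _ (by omega)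
      have hq1 : 1 ≤ q := by
        rw [hq, Nat.le_div_iff_mul_le (by omega : 0 < c 2)]
        omega
      have hveq : v - c 2 = c 2 * (q - 1) + r := by
        have : c 2 * q = c 2 * (q - 1) + c 2 := by
          conv_lhs => rw [show q = (q - 1) + 1 by omega]
          ring
        omega
      rw [hveq, Nat.mul_add_div (by omega), Nat.mul_add_mod,
        Nat.div_eq_of_lt hrlt, Nat.mod_eq_of_lt hrlt]
      omega

end KZgrd

section KZsmall

variable {n : ℕ} {c : ℕ → ℕ}

lemma opt_small_ge (h1 : c 1 = 1) (hm : StrictMonoOn c (Set.Icc 1 n)) (hn : 3 ≤ n)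
    {v : ℕ} (hv : v < c 3) : v / c 2 + v % c 2 ≤ opt n c v := by
  have h12 : c 1 < c 2 := hm ⟨le_rfl, by omega⟩ ⟨by omega, by omega⟩ (by omega)
  have hc2 : 2 ≤ c 2 := by omega
  obtain ⟨x, hx, hxc⟩ := exists_opt h1 (show 1 ≤ n by omega) v
  have hzero : ∀ i ∈ Finset.Icc 1 n, i ∉ Finset.Icc 1 2 → c i * x i = 0 := by
    intro i hi hni
    rw [Finset.mem_Icc] at hi
    rw [Finset.mem_Icc] at hni
    have h3i : 3 ≤ i := by omega
    by_contra hne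
    have hxi : 1 ≤ x i := by
      by_contra h
      have : x i = 0 := by omega
      simp [this] at hne
    have hle : c i * x i ≤ v := by
      rw [← hx]
      exact Finset.single_le_sum (f := fun i => c i * x i)
        (fun i _ => Nat.zero_le _) (Finset.mem_Icc.mpr ⟨by omega, hi.2⟩)
    have h3le : c 3 ≤ c i := c_le_c hm (by omega) h3i hi.2
    have : c i ≤ c i * x i := Nat.le_mul_of_pos_right _ hxi
    omega
  have hsub : Finset.Icc 1 2 ⊆ Finset.Icc 1 n := Finset.Icc_subset_Icc_right (by omega)
  have hpair : (Finset.Icc 1 2 : Finset ℕ) = {1, 2} := by decide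
  have hsum2 : x 1 + c 2 * x 2 = v := by
    have := Finset.sum_subset hsub hzero
    rw [hx] at this
    rw [hpair] at this
    rw [Finset.sum_pair (by omega : (1:ℕ) ≠ 2)] at this
    rw [h1, one_mul] at this
    exact this
  have hcnt : x 1 + x 2 ≤ opt n c v := by
    have := Finset.sum_le_sum_of_subset (f := x) hsub
    rw [hxc, hpair, Finset.sum_pair (by omega : (1:ℕ) ≠ 2)] at this
    exact this
  have hdm := Nat.div_add_mod v (c 2)
  set q := v / c 2 with hq
  set r := v % c 2 with hr
  have hx2q : x 2 ≤ q := by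
    rw [hq, Nat.le_div_iff_mul_le (by omega : 0 < c 2), mul_comm]
    omega
  have hkey : c 2 * q = c 2 * x 2 + c 2 * (q - x 2) := by
    conv_lhs => rw [show q = x 2 + (q - x 2) by omega]
    ring
  have hmul : q - x 2 ≤ c 2 * (q - x 2) := Nat.le_mul_of_pos_left _ (by omega)
  omega

end KZsmall

/-- Bounds on the minimum counterexample (Kozen and Zaks). -/
theorem min_counterexample_bounds (n : ℕ) (c : ℕ → ℕ) (hn : 3 ≤ n)
    (hsys : IsSystem n c) (hnc : ¬ Canonical n c) (w : ℕ) (hw : MinCex n c w) :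
    c 3 + 1 < w ∧ w < c (n - 1) + c n := by
  obtain ⟨h1, hm⟩ := hsys
  obtain ⟨⟨hwpos, hwcex⟩, hmin⟩ := hw
  have hn1 : 1 ≤ n := by omega
  have h12 : c 1 < c 2 := hm ⟨le_rfl, by omega⟩ ⟨by omega, by omega⟩ (by omega)
  have h23 : c 2 < c 3 := hm ⟨by omega, by omega⟩ ⟨by omega, by omega⟩ (by omega)
  have hc2 : 2 ≤ c 2 := by omega
  have hminle : ∀ u, u < w → grd n c u ≤ opt n c u := by
    intro u hu
    rcases Nat.eq_zero_or_pos u with h0 | hup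
    · subst h0; rw [grd_zero, opt_zero]
    by_contra h
    have : IsCex n c u := ⟨hup, by omega⟩
    have := hmin u this
    omega
  constructor
  · -- lower bound
    by_contra hcon
    push_neg at hcon
    have hgle : grd n c w ≤ opt n c w := by
      rcases Nat.lt_or_ge w (c 3) with h3 | h3
      · rw [grd_small h1 hm hn w h3]
        exact opt_small_ge h1 hm hn h3
      have hw3 : w = c 3 ∨ w = c 3 + 1 := by omega
      rcases hw3 with he | he
      · subst he
        rw [grd_step h1 hm hn1 (by omega : 1 ≤ 3) hn le_rfl
          (fun i _ _ hi => hi)]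
        simp only [Nat.sub_self, grd_zero]
        exact opt_pos h1 hn1 (by omega)
      · subst he
        by_cases hcoin : ∃ j, 1 ≤ j ∧ j ≤ n ∧ c j = c 3 + 1
        · obtain ⟨j, hj1, hjn, hcj⟩ := hcoin
          rw [grd_step h1 hm hn1 hj1 hjn (le_of_eq hcj) (fun i _ _ hi => hcj ▸ hi)]
          rw [hcj, Nat.sub_self, grd_zero]
          exact opt_pos h1 hn1 (by omega)
        · have hmax : ∀ i, 1 ≤ i → i ≤ n → c i ≤ c 3 + 1 → c i ≤ c 3 := by
            intro i hi1 hin hile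
            by_contra hgt
            exact hcoin ⟨i, hi1, hin, by omega⟩
          rw [grd_step h1 hm hn1 (by omega : 1 ≤ 3) hn (by omega) hmax]
          have : c 3 + 1 - c 3 = 1 := by omega
          rw [this, grd_small h1 hm hn 1 (by omega)]
          rw [Nat.div_eq_of_lt (by omega), Nat.mod_eq_of_lt (by omega)]
          -- goal : 0 + 1 + 1 ≤ opt n c (c 3 + 1)
          obtain ⟨x, hx, hxc⟩ := exists_opt h1 hn1 (c 3 + 1)
          have hop1 : 1 ≤ opt n c (c 3 + 1) := opt_pos h1 hn1 (by omega)
          rcases Nat.lt_or_ge 1 (opt n c (c 3 + 1)) with h | h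
          · omega
          have hopt1 : opt n c (c 3 + 1) = 1 := by omega
          exfalso
          rw [hopt1] at hxc
          obtain ⟨j, hjmem, hjne⟩ := Finset.exists_ne_zero_of_sum_ne_zero
            (by rw [hxc]; omega : ∑ i ∈ Finset.Icc 1 n, x i ≠ 0)
          have hecnt : ∑ i ∈ (Finset.Icc 1 n).erase j, x i + x j = 1 := by
            rw [Finset.sum_erase_add _ _ hjmem]; exact hxc
          have hxj : x j = 1 := by omega
          have hzero : ∑ i ∈ (Finset.Icc 1 n).erase j, x i = 0 := by omega
          have hz : ∀ i ∈ (Finset.Icc 1 n).erase j, x i = 0 :=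
            Finset.sum_eq_zero_iff.mp hzero
          have hesum : ∑ i ∈ (Finset.Icc 1 n).erase j, c i * x i + c j * x j = c 3 + 1 := by
            rw [Finset.sum_erase_add _ _ hjmem]; exact hx
          have : ∑ i ∈ (Finset.Icc 1 n).erase j, c i * x i = 0 :=
            Finset.sum_eq_zero (fun i hi => by rw [hz i hi, mul_zero])
          rw [hxj, mul_one] at hesum
          rw [Finset.mem_Icc] at hjmem
          exact hcoin ⟨j, hjmem.1, hjmem.2, by omega⟩
    omega
  · -- upper bound
    by_contra hcon
    push_neg at hcon
    have hcn1 : 1 ≤ c n := c_pos h1 hm hn1 le_rfl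
    have hcn1' : 1 ≤ c (n - 1) := c_pos h1 hm (by omega) (by omega)
    have hcnw : c n ≤ w := by omega
    have hmaxn : ∀ i, 1 ≤ i → i ≤ n → c i ≤ w → c i ≤ c n :=
      fun i hi1 hin _ => c_le_c hm hi1 hin le_rfl
    have hgw : grd n c w = grd n c (w - c n) + 1 :=
      grd_step h1 hm hn1 hn1 le_rfl hcnw hmaxn
    obtain ⟨x, hx, hxc⟩ := exists_opt h1 hn1 w
    have hgle : grd n c w ≤ opt n c w := by
      by_cases hxn : 0 < x n
      · obtain ⟨_, hsub⟩ := opt_sub_coin h1 hm hn1 hn1 le_rfl hx hxc hxn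
        have := hminle (w - c n) (by omega)
        omega
      · obtain ⟨j, hjmem, hjne⟩ := Finset.exists_ne_zero_of_sum_ne_zero
          (by rw [hx]; omega : ∑ i ∈ Finset.Icc 1 n, c i * x i ≠ 0)
        rw [Finset.mem_Icc] at hjmem
        have hxj : 0 < x j := by
          by_contra h
          have : x j = 0 := by omega
          simp [this] at hjne
        have hjn' : j ≤ n - 1 := by
          rcases Nat.lt_or_ge j n with h | h
          · omega
          · exfalso; have : j = n := by omega
            subst this; omega
        have hcjle : c j ≤ c (n - 1) := c_le_c hm hjmem.1 hjn' (by omega)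
        obtain ⟨hcjw, hsubj⟩ := opt_sub_coin h1 hm hn1 hjmem.1 hjmem.2 hx hxc hxj
        have hcj1 : 1 ≤ c j := c_pos h1 hm hjmem.1 hjmem.2
        set v := w - c j with hv
        have hcnv : c n ≤ v := by omega
        have hgv : grd n c v = grd n c (v - c n) + 1 :=
          grd_step h1 hm hn1 hn1 le_rfl hcnv
            (fun i hi1 hin _ => c_le_c hm hi1 hin le_rfl)
        have h2 : grd n c v ≤ opt n c v := hminle v (by omega)
        have h3 : grd n c (w - c n) ≤ opt n c (w - c n) := hminle _ (by omega)
        have h4 : opt n c (w - c n) ≤ opt n c (v - c n) + 1 := by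
          have heq : (v - c n) + c j = w - c n := by omega
          calc opt n c (w - c n) = opt n c ((v - c n) + c j) := by rw [heq]
            _ ≤ _ := opt_add_coin h1 hn1 hjmem.1 hjmem.2
        have h5 : opt n c (v - c n) ≤ grd n c (v - c n) := opt_le_grd h1 hm hn1 _
        omega
    omega
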